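/- Closure of the extended generator family under the pre-Lie operation (from the proof of Proposition exp01). Let F be the set of operators consisting of all z^γ·D^(𝐧) with [γ] ≥ 0 and |γ| > |𝐧| (𝐧 ∈ ℕ² arbitrary, including 0), together with all z^{e_𝐦}·D^(𝐧) with 𝐦, 𝐧 ∈ ℕ², 𝐦 ≥ 𝐧 componentwise and 𝐦 ≠ 𝐧. Then for every D₁ ∈ F and every D₂ = z^{γ₂}·D^(𝐧₂) ∈ F, the operator (D₁(z^{γ₂}))·D^(𝐧₂) (multiplication by the polynomial D₁(z^{γ₂}) composed with D^(𝐧₂)) lies in the ℝ-linear span of F. -/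

import Mathlib

open MvPolynomial

abbrev N2 : Type := {p : ℕ × ℕ // p ≠ (0, 0)}
abbrev Idx : Type := ℕ ⊕ N2
abbrev MIdx : Type := Idx →₀ ℕ
abbrev PS : Type := MvPowerSeries Idx ℝ

noncomputable section

/-- the weight `|𝐧| = w₁ n₁ + w₂ n₂` of `𝐧 ∈ ℕ²`. -/
def wt (w₁ w₂ : ℝ) (n : ℕ × ℕ) : ℝ := w₁ * n.1 + w₂ * n.2

/-- `[γ] = Σ_k k γ(k) − Σ_{𝐧≠0} γ(𝐧)`. -/
def brk (γ : MIdx) : ℤ :=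
  γ.sum fun i n =>
    match i with
    | Sum.inl k => (k : ℤ) * n
    | Sum.inr _ => -(n : ℤ)

/-- `Σ_{𝐦≠0} |𝐦| γ(𝐦)`. -/
def wsum (w₁ w₂ : ℝ) (γ : MIdx) : ℝ :=
  γ.sum fun i n =>
    match i with
    | Sum.inl _ => 0
    | Sum.inr m => wt w₁ w₂ m.1 * n

/-- the homogeneity `|γ| = α([γ]+1) + Σ_{𝐧≠0}|𝐧|γ(𝐧)`. -/
def homdeg (α w₁ w₂ : ℝ) (γ : MIdx) : ℝ := α * ((brk γ : ℝ) + 1) + wsum w₁ w₂ γ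

/-! ### operators on monomials (polynomial level) -/

/-- `D^(0) z^γ = Σ_k (k+1) γ(k) z^{γ - e_k + e_{k+1}}`. -/
def D0mono (γ : MIdx) : MvPolynomial Idx ℝ :=
  γ.sum fun i n =>
    match i with
    | Sum.inl k =>
        (((k + 1) * n : ℕ) : ℝ) •
          monomial (γ - Finsupp.single (Sum.inl k) 1 + Finsupp.single (Sum.inl (k + 1)) 1) 1
    | Sum.inr _ => 0

/-- `D^(𝐧) z^γ = ∂_{z_𝐧} z^γ` for `𝐧 ≠ 0`. -/
def DNmono (m : N2) (γ : MIdx) : MvPolynomial Idx ℝ :=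
  ((γ (Sum.inr m) : ℕ) : ℝ) • monomial (γ - Finsupp.single (Sum.inr m) 1) 1

/-- `D^(𝐧) z^γ` for arbitrary `𝐧 ∈ ℕ²`. -/
def Dmono (n : ℕ × ℕ) (γ : MIdx) : MvPolynomial Idx ℝ :=
  if h : n = (0, 0) then D0mono γ else DNmono ⟨n, h⟩ γ

lemma add10_ne (n : ℕ × ℕ) : n + (1, 0) ≠ (0, 0) := by
  intro h
  exact Nat.succ_ne_zero n.1 (congrArg Prod.fst h)

lemma add01_ne (n : ℕ × ℕ) : n + (0, 1) ≠ (0, 0) := by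
  intro h
  exact Nat.succ_ne_zero n.2 (congrArg Prod.snd h)

def v10 : N2 := ⟨(1, 0), by decide⟩
def v01 : N2 := ⟨(0, 1), by decide⟩

/-- `∂₁ z^γ = z_{(1,0)} D^(0) z^γ + Σ_{𝐧≠0} (n₁+1) z_{𝐧+(1,0)} ∂_{z_𝐧} z^γ`. -/
def d1mono (γ : MIdx) : MvPolynomial Idx ℝ :=
  X (Sum.inr v10) * D0mono γ +
    γ.sum fun i n =>
      match i with
      | Sum.inl _ => 0
      | Sum.inr m =>
          (((m.1.1 + 1) * n : ℕ) : ℝ) •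
            monomial
              (γ - Finsupp.single (Sum.inr m) 1 +
                Finsupp.single (Sum.inr ⟨m.1 + (1, 0), add10_ne m.1⟩) 1) 1

/-- `∂₂ z^γ`. -/
def d2mono (γ : MIdx) : MvPolynomial Idx ℝ :=
  X (Sum.inr v01) * D0mono γ +
    γ.sum fun i n =>
      match i with
      | Sum.inl _ => 0
      | Sum.inr m =>
          (((m.1.2 + 1) * n : ℕ) : ℝ) •
            monomial
              (γ - Finsupp.single (Sum.inr m) 1 +
                Finsupp.single (Sum.inr ⟨m.1 + (0, 1), add01_ne m.1⟩) 1) 1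

/-! ### operators on power series (coefficientwise) -/

/-- coefficient of `D^(0) f` at `β`. -/
def D0coeff (f : PS) (β : MIdx) : ℝ :=
  ∑ i ∈ β.support,
    match i with
    | Sum.inl (k + 1) =>
        (((k + 1) * (β (Sum.inl k) + 1) : ℕ) : ℝ) *
          MvPowerSeries.coeff (R := ℝ)
            (β + Finsupp.single (Sum.inl k) 1 - Finsupp.single (Sum.inl (k + 1)) 1) f
    | _ => 0

/-- `D^(0)` on power series. -/
def D0series (f : PS) : PS := D0coeff f

/-- `D^(𝐧) = ∂_{z_𝐧}` on power series, `𝐧 ≠ 0`. -/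
def DNseries (m : N2) (f : PS) : PS :=
  fun β => ((β (Sum.inr m) + 1 : ℕ) : ℝ) *
    MvPowerSeries.coeff (R := ℝ) (β + Finsupp.single (Sum.inr m) 1) f

/-- `D^(𝐧)` on power series for arbitrary `𝐧 ∈ ℕ²`. -/
def Dseries (n : ℕ × ℕ) (f : PS) : PS :=
  if h : n = (0, 0) then D0series f else DNseries ⟨n, h⟩ f

/-- coefficient of `∂₁ f` at `β`. -/
def d1coeff (f : PS) (β : MIdx) : ℝ :=
  (if 1 ≤ β (Sum.inr v10) then D0coeff f (β - Finsupp.single (Sum.inr v10) 1) else 0) +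
    ∑ i ∈ β.support,
      match i with
      | Sum.inl _ => 0
      | Sum.inr p =>
          if hp : ((p.1.1 - 1, p.1.2) : ℕ × ℕ) ≠ (0, 0) ∧ 1 ≤ p.1.1 then
            (p.1.1 : ℝ) *
              ((((β - Finsupp.single (Sum.inr p) 1 : MIdx) (Sum.inr ⟨(p.1.1 - 1, p.1.2), hp.1⟩) : ℕ) + 1 : ℕ) : ℝ) *
              MvPowerSeries.coeff (R := ℝ)
                (β - Finsupp.single (Sum.inr p) 1 +
                  Finsupp.single (Sum.inr ⟨(p.1.1 - 1, p.1.2), hp.1⟩) 1) f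
          else 0

/-- `∂₁` on power series. -/
def d1series (f : PS) : PS := d1coeff f

/-- coefficient of `∂₂ f` at `β`. -/
def d2coeff (f : PS) (β : MIdx) : ℝ :=
  (if 1 ≤ β (Sum.inr v01) then D0coeff f (β - Finsupp.single (Sum.inr v01) 1) else 0) +
    ∑ i ∈ β.support,
      match i with
      | Sum.inl _ => 0
      | Sum.inr p =>
          if hp : ((p.1.1, p.1.2 - 1) : ℕ × ℕ) ≠ (0, 0) ∧ 1 ≤ p.1.2 then
            (p.1.2 : ℝ) *
              ((((β - Finsupp.single (Sum.inr p) 1 : MIdx) (Sum.inr ⟨(p.1.1, p.1.2 - 1), hp.1⟩) : ℕ) + 1 : ℕ) : ℝ) *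
              MvPowerSeries.coeff (R := ℝ)
                (β - Finsupp.single (Sum.inr p) 1 +
                  Finsupp.single (Sum.inr ⟨(p.1.1, p.1.2 - 1), hp.1⟩) 1) f
          else 0

/-- `∂₂` on power series. -/
def d2series (f : PS) : PS := d2coeff f

/-- the operator `z^γ·D^(𝐧)` on power series. -/
def opOf (γ : MIdx) (n : ℕ × ℕ) (f : PS) : PS :=
  MvPowerSeries.monomial (R := ℝ) γ 1 * Dseries n f

/-- the dual model space `T̃*`. -/
def Ttilde : Set PS := {f | ∀ γ : MIdx, MvPowerSeries.coeff (R := ℝ) γ f ≠ 0 → 0 ≤ brk γ}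

/-- the dual model space `T*`. -/
def Tstar : Set PS :=
  {f | ∀ γ : MIdx, MvPowerSeries.coeff (R := ℝ) γ f ≠ 0 →
      0 ≤ brk γ ∨ ∃ m : N2, γ = Finsupp.single (Sum.inr m) 1}

/-! ### topology and the realization property -/

instance : TopologicalSpace PS := inferInstanceAs (TopologicalSpace ((Idx →₀ ℕ) → ℝ))

/-- `Γ` realizes the family `(π^(𝐧))_{𝐧∈ℕ²}`. -/
def Realizes (Γ : PS →ₐ[ℝ] PS) (π : ℕ × ℕ → PS) : Prop :=
  Continuous Γ ∧
    (∀ m : N2, Γ (MvPowerSeries.X (Sum.inr m)) = MvPowerSeries.X (Sum.inr m) + π m.1) ∧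
    (∀ k : ℕ, HasSum
      (fun l : ℕ => ((k + l).choose k : ℝ) • (π (0, 0) ^ l * MvPowerSeries.X (Sum.inl (k + l))))
      (Γ (MvPowerSeries.X (Sum.inl k))))

end

/-- the extended generator family. -/
def Fam16 (α w₁ w₂ : ℝ) : Set (PS → PS) :=
  {T | ∃ (γ : MIdx) (n : ℕ × ℕ), 0 ≤ brk γ ∧ wt w₁ w₂ n < homdeg α w₁ w₂ γ ∧ T = opOf γ n}
    ∪ {T | ∃ (m n : ℕ × ℕ) (hm : m ≠ (0, 0)), n.1 ≤ m.1 ∧ n.2 ≤ m.2 ∧ m ≠ n ∧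
        T = opOf (Finsupp.single (Sum.inr ⟨m, hm⟩) 1) n}

section Stmt16Aux
open MvPowerSeries Finsupp

lemma brk_add (γ δ : MIdx) : brk (γ + δ) = brk γ + brk δ := by
  unfold brk
  apply Finsupp.sum_add_index
  · intro i _; cases i <;> simp
  · intro i _ m n; cases i <;> push_cast <;> ring

lemma wsum_add (w₁ w₂ : ℝ) (γ δ : MIdx) : wsum w₁ w₂ (γ + δ) = wsum w₁ w₂ γ + wsum w₁ w₂ δ := by
  unfold wsum
  apply Finsupp.sum_add_index
  · intro i _; cases i <;> simp
  · intro i _ m n; cases i <;> push_cast <;> ring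

lemma brk_single_inl (k n : ℕ) : brk (Finsupp.single (Sum.inl k) n) = k * n := by
  unfold brk; rw [Finsupp.sum_single_index] <;> simp

lemma brk_single_inr (m : N2) (n : ℕ) : brk (Finsupp.single (Sum.inr m) n) = -n := by
  unfold brk; rw [Finsupp.sum_single_index] <;> simp

lemma wsum_single_inl (w₁ w₂ : ℝ) (k n : ℕ) : wsum w₁ w₂ (Finsupp.single (Sum.inl k) n) = 0 := by
  unfold wsum; rw [Finsupp.sum_single_index] <;> simp

lemma wsum_single_inr (w₁ w₂ : ℝ) (m : N2) (n : ℕ) :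
    wsum w₁ w₂ (Finsupp.single (Sum.inr m) n) = wt w₁ w₂ m.1 * n := by
  unfold wsum; rw [Finsupp.sum_single_index] <;> simp

lemma wt_nonneg {w₁ w₂ : ℝ} (hw₁ : 0 < w₁) (hw₂ : 0 < w₂) (n : ℕ × ℕ) : 0 ≤ wt w₁ w₂ n := by
  unfold wt; positivity

lemma wt_lt {w₁ w₂ : ℝ} (hw₁ : 0 < w₁) (hw₂ : 0 < w₂) {n m : ℕ × ℕ}
    (h1 : n.1 ≤ m.1) (h2 : n.2 ≤ m.2) (hne : m ≠ n) : wt w₁ w₂ n < wt w₁ w₂ m := by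
  unfold wt
  rcases lt_or_eq_of_le h1 with h | h
  · have : (n.1 : ℝ) < m.1 := by exact_mod_cast h
    have : (n.2 : ℝ) ≤ m.2 := by exact_mod_cast h2
    nlinarith
  · rcases lt_or_eq_of_le h2 with h' | h'
    · have : (n.2 : ℝ) < m.2 := by exact_mod_cast h'
      have : (n.1 : ℝ) ≤ m.1 := by exact_mod_cast h1
      nlinarith
    · exact absurd (Prod.ext h.symm h'.symm) hne

lemma wt_pos {w₁ w₂ : ℝ} (hw₁ : 0 < w₁) (hw₂ : 0 < w₂) {m : ℕ × ℕ} (hm : m ≠ (0,0)) :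
    0 < wt w₁ w₂ m := by
  have := wt_lt hw₁ hw₂ (n := (0,0)) (m := m) (Nat.zero_le _) (Nat.zero_le _) hm
  simpa [wt] using this

end Stmt16Aux
section Stmt16Aux2
open MvPowerSeries Finsupp

lemma smul_monomial_apply (c : ℝ) (δ β : MIdx) :
    (c • (MvPowerSeries.monomial (R := ℝ) δ 1 : PS)) β = if β = δ then c else 0 := by
  change c * MvPowerSeries.coeff (R := ℝ) β (MvPowerSeries.monomial (R := ℝ) δ 1) = _
  rw [MvPowerSeries.coeff_monomial]
  split_ifs <;> ring

lemma DN_monomial (m : N2) (γ : MIdx) :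
    DNseries m (MvPowerSeries.monomial (R := ℝ) γ 1) =
      ((γ (Sum.inr m) : ℕ) : ℝ) •
        (MvPowerSeries.monomial (R := ℝ) (γ - Finsupp.single (Sum.inr m) 1) 1 : PS) := by
  classical
  funext β
  rw [smul_monomial_apply]
  show ((β (Sum.inr m) + 1 : ℕ) : ℝ) *
      MvPowerSeries.coeff (R := ℝ) (β + Finsupp.single (Sum.inr m) 1) (MvPowerSeries.monomial (R := ℝ) γ 1) = _
  rw [MvPowerSeries.coeff_monomial]
  by_cases h : β + Finsupp.single (Sum.inr m) 1 = γ
  · have hβ : β = γ - Finsupp.single (Sum.inr m) 1 := by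
      rw [← h, add_tsub_cancel_right]
    have hγm : γ (Sum.inr m) = β (Sum.inr m) + 1 := by
      rw [← h]; simp
    rw [if_pos h, if_pos hβ, hγm]
    push_cast; ring
  · rw [if_neg h, mul_zero]
    by_cases h' : β = γ - Finsupp.single (Sum.inr m) 1
    · rw [if_pos h']
      by_cases hz : γ (Sum.inr m) = 0
      · simp [hz]
      · exfalso
        apply h
        rw [h', tsub_add_cancel_of_le]
        exact Finsupp.single_le_iff.mpr (Nat.one_le_iff_ne_zero.mpr hz)
    · rw [if_neg h']

end Stmt16Aux2
section Stmt16Aux3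
open MvPowerSeries Finsupp

noncomputable def D0term (γ : MIdx) : Idx → PS
  | Sum.inl k => (((k+1) * γ (Sum.inl k) : ℕ) : ℝ) •
      (MvPowerSeries.monomial (R := ℝ)
        (γ - Finsupp.single (Sum.inl k) 1 + Finsupp.single (Sum.inl (k+1)) 1) 1 : PS)
  | Sum.inr _ => 0

lemma D0_monomial (γ : MIdx) :
    D0series (MvPowerSeries.monomial (R := ℝ) γ 1) = ∑ i ∈ γ.support, D0term γ i := by
  classical
  funext β
  set eL : ℕ → MIdx := fun k => Finsupp.single (Sum.inl k) 1 with heL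
  have hval : ∀ k : ℕ, β + eL k - eL (k+1) = γ → γ (Sum.inl k) = β (Sum.inl k) + 1 := by
    intro k hc
    rw [← hc]
    simp [heL, Finsupp.tsub_apply, Finsupp.add_apply, Finsupp.single_apply]
  have main : ∀ k : ℕ,
      (β (Sum.inl (k+1)) ≠ 0 ∧ β + eL k - eL (k+1) = γ) ↔
        (γ (Sum.inl k) ≠ 0 ∧ β = γ - eL k + eL (k+1)) := by
    intro k
    constructor
    · rintro ⟨hb, hc⟩
      have hγk : γ (Sum.inl k) ≠ 0 := by rw [hval k hc]; omega
      have h1 : eL (k+1) ≤ β + eL k :=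
        le_trans (Finsupp.single_le_iff.mpr (Nat.one_le_iff_ne_zero.mpr hb)) le_self_add
      have h2 : γ + eL (k+1) = β + eL k := by rw [← hc, tsub_add_cancel_of_le h1]
      have h3 : eL k ≤ γ :=
        Finsupp.single_le_iff.mpr (Nat.one_le_iff_ne_zero.mpr hγk)
      refine ⟨hγk, ?_⟩
      rw [tsub_add_eq_add_tsub h3, h2, add_tsub_cancel_right]
    · rintro ⟨hγk, hβ⟩
      have h3 : eL k ≤ γ :=
        Finsupp.single_le_iff.mpr (Nat.one_le_iff_ne_zero.mpr hγk)
      have hb : β (Sum.inl (k+1)) ≠ 0 := by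
        rw [hβ]
        simp [heL, Finsupp.add_apply, Finsupp.single_apply]
      refine ⟨hb, ?_⟩
      have h4 : β + eL k = γ + eL (k+1) := by
        rw [hβ, add_right_comm, tsub_add_cancel_of_le h3]
      rw [h4, add_tsub_cancel_right]
  set G : ℕ → ℝ := fun k =>
    if β (Sum.inl (k+1)) ≠ 0 ∧ β + eL k - eL (k+1) = γ
    then (((k+1) * (β (Sum.inl k) + 1) : ℕ) : ℝ) else 0 with hG
  set H : ℕ → ℝ := fun k =>
    if γ (Sum.inl k) ≠ 0 ∧ β = γ - eL k + eL (k+1)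
    then (((k+1) * γ (Sum.inl k) : ℕ) : ℝ) else 0 with hH
  set gL : Idx → ℝ := fun i => match i with
    | Sum.inl (k+1) => G k
    | _ => 0 with hgL
  set hR : Idx → ℝ := fun i => match i with
    | Sum.inl k => H k
    | Sum.inr _ => 0 with hhR
  set M : ℕ := ((β.support ∪ γ.support).sup fun i => match i with
    | Sum.inl k => k + 2
    | Sum.inr _ => 0) with hM
  -- gL vanishes off β.support
  have hgL0 : ∀ i : Idx, i ∉ β.support → gL i = 0 := by
    intro i hi
    rcases i with k | p
    · rcases k with _ | k
      · rfl
      · show G k = 0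
        simp only [hG]
        rw [if_neg]
        rintro ⟨hb, -⟩
        exact hi (Finsupp.mem_support_iff.mpr hb)
    · rfl
  have hhR0 : ∀ i : Idx, i ∉ γ.support → hR i = 0 := by
    intro i hi
    rcases i with k | p
    · show H k = 0
      simp only [hH]
      rw [if_neg]
      rintro ⟨hb, -⟩
      exact hi (Finsupp.mem_support_iff.mpr hb)
    · rfl
  have hLHS : D0series (MvPowerSeries.monomial (R := ℝ) γ 1) β = ∑ k ∈ Finset.range M, G k := by
    have e1 : D0series (MvPowerSeries.monomial (R := ℝ) γ 1) β = ∑ i ∈ β.support, gL i := by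
      show D0coeff (MvPowerSeries.monomial (R := ℝ) γ 1) β = _
      rw [D0coeff]
      apply Finset.sum_congr rfl
      intro i hi
      rcases i with k | p
      · rcases k with _ | k
        · rfl
        · show (((k + 1) * (β (Sum.inl k) + 1) : ℕ) : ℝ) *
              MvPowerSeries.coeff (R := ℝ) (β + Finsupp.single (Sum.inl k) 1
                - Finsupp.single (Sum.inl (k+1)) 1) (MvPowerSeries.monomial (R := ℝ) γ 1) = G k
          rw [MvPowerSeries.coeff_monomial]
          simp only [hG]
          have hb : β (Sum.inl (k+1)) ≠ 0 := Finsupp.mem_support_iff.mp hi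
          by_cases hc : β + eL k - eL (k+1) = γ
          · rw [if_pos (by exact hc : (β + Finsupp.single (Sum.inl k) 1
                - Finsupp.single (Sum.inl (k+1)) 1) = γ), if_pos ⟨hb, hc⟩, mul_one]
          · rw [if_neg (by exact hc : ¬(β + Finsupp.single (Sum.inl k) 1
                - Finsupp.single (Sum.inl (k+1)) 1) = γ), if_neg (by tauto), mul_zero]
      · rfl
    rw [e1]
    have e2 : ∑ i ∈ β.support, gL i
        = ∑ i ∈ β.support ∪ (Finset.range M).image (fun k => (Sum.inl (k+1) : Idx)), gL i := by
      apply Finset.sum_subset Finset.subset_union_left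
      intro i _ hi
      exact hgL0 i hi
    have e3 : ∑ i ∈ β.support ∪ (Finset.range M).image (fun k => (Sum.inl (k+1) : Idx)), gL i
        = ∑ i ∈ (Finset.range M).image (fun k => (Sum.inl (k+1) : Idx)), gL i := by
      symm
      apply Finset.sum_subset Finset.subset_union_right
      intro i hiu hi
      rcases i with k | p
      · rcases k with _ | k
        · rfl
        · exfalso
          apply hi
          have hmem : (Sum.inl (k+1) : Idx) ∈ β.support ∪ γ.support := by
            rcases Finset.mem_union.mp hiu with h | h
            · exact Finset.mem_union_left _ h
            · exact absurd h hi
          have : k + 1 + 2 ≤ M := by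
            rw [hM]
            exact Finset.le_sup (f := fun i : Idx => match i with
              | Sum.inl k => k + 2 | Sum.inr _ => 0) hmem
          exact Finset.mem_image.mpr ⟨k, Finset.mem_range.mpr (by omega), rfl⟩
      · rfl
    rw [e2, e3, Finset.sum_image (by intro a _ b _ h; simpa using h)]
  have hRHS : (∑ i ∈ γ.support, D0term γ i) β = ∑ k ∈ Finset.range M, H k := by
    have e1 : (∑ i ∈ γ.support, D0term γ i) β = ∑ i ∈ γ.support, hR i := by
      refine (Finset.sum_apply (M := fun _ : MIdx => ℝ) β γ.support (fun i => D0term γ i)).trans ?_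
      apply Finset.sum_congr rfl
      intro i hi
      rcases i with k | p
      · show ((((k+1) * γ (Sum.inl k) : ℕ) : ℝ) •
            (MvPowerSeries.monomial (R := ℝ) (γ - eL k + eL (k+1)) 1 : PS)) β = H k
        rw [smul_monomial_apply]
        simp only [hH]
        have hb : γ (Sum.inl k) ≠ 0 := Finsupp.mem_support_iff.mp hi
        by_cases hc : β = γ - eL k + eL (k+1)
        · rw [if_pos hc, if_pos ⟨hb, hc⟩]
        · rw [if_neg hc, if_neg (by tauto)]
      · rfl
    rw [e1]
    have e2 : ∑ i ∈ γ.support, hR i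
        = ∑ i ∈ γ.support ∪ (Finset.range M).image (fun k => (Sum.inl k : Idx)), hR i := by
      apply Finset.sum_subset Finset.subset_union_left
      intro i _ hi
      exact hhR0 i hi
    have e3 : ∑ i ∈ γ.support ∪ (Finset.range M).image (fun k => (Sum.inl k : Idx)), hR i
        = ∑ i ∈ (Finset.range M).image (fun k => (Sum.inl k : Idx)), hR i := by
      symm
      apply Finset.sum_subset Finset.subset_union_right
      intro i hiu hi
      rcases i with k | p
      · exfalso
        apply hi
        have hmem : (Sum.inl k : Idx) ∈ β.support ∪ γ.support := by
          rcases Finset.mem_union.mp hiu with h | h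
          · exact Finset.mem_union_right _ h
          · exact absurd h hi
        have : k + 2 ≤ M := by
          rw [hM]
          exact Finset.le_sup (f := fun i : Idx => match i with
            | Sum.inl k => k + 2 | Sum.inr _ => 0) hmem
        exact Finset.mem_image.mpr ⟨k, Finset.mem_range.mpr (by omega), rfl⟩
      · rfl
    rw [e2, e3, Finset.sum_image (by intro a _ b _ h; simpa using h)]
  rw [hLHS, hRHS]
  apply Finset.sum_congr rfl
  intro k _
  simp only [hG, hH]
  by_cases h1 : β (Sum.inl (k+1)) ≠ 0 ∧ β + eL k - eL (k+1) = γ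
  · rw [if_pos h1, if_pos ((main k).mp h1), hval k h1.2]
  · rw [if_neg h1, if_neg (fun h => h1 ((main k).mpr h))]

end Stmt16Aux3
section Stmt16Aux4
open MvPowerSeries Finsupp

lemma monomial_ne_zero' (δ : MIdx) : (MvPowerSeries.monomial (R := ℝ) δ 1 : PS) ≠ 0 := by
  intro h
  have := congrArg (fun f : PS => MvPowerSeries.coeff (R := ℝ) δ f) h
  simp [MvPowerSeries.coeff_monomial] at this

lemma monomial_inj' {δ δ' : MIdx}
    (h : (MvPowerSeries.monomial (R := ℝ) δ 1 : PS) = MvPowerSeries.monomial (R := ℝ) δ' 1) : δ = δ' := by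
  by_contra hne
  have := congrArg (fun f : PS => MvPowerSeries.coeff (R := ℝ) δ f) h
  simp only [MvPowerSeries.coeff_monomial, if_pos rfl] at this
  rw [if_neg hne] at this
  exact one_ne_zero this

lemma D0series_XR (w : N2) :
    D0series (MvPowerSeries.monomial (R := ℝ) (Finsupp.single (Sum.inr w) 1) 1) = 0 := by
  rw [D0_monomial, Finsupp.support_single_ne_zero _ one_ne_zero, Finset.sum_singleton]
  rfl

lemma D0series_XL0 :
    D0series (MvPowerSeries.monomial (R := ℝ) (Finsupp.single (Sum.inl 0) 1) 1) =
      MvPowerSeries.monomial (R := ℝ) (Finsupp.single (Sum.inl 1) 1) 1 := by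
  rw [D0_monomial, Finsupp.support_single_ne_zero _ one_ne_zero, Finset.sum_singleton]
  show (((0+1) * (Finsupp.single (Sum.inl 0) 1 : MIdx) (Sum.inl 0) : ℕ) : ℝ) •
      (MvPowerSeries.monomial (R := ℝ)
        ((Finsupp.single (Sum.inl 0) 1 : MIdx) - Finsupp.single (Sum.inl 0) 1
          + Finsupp.single (Sum.inl (0+1)) 1) 1 : PS) = _
  simp

lemma Dseries_XR (n : ℕ × ℕ) (w : N2) :
    Dseries n (MvPowerSeries.monomial (R := ℝ) (Finsupp.single (Sum.inr w) 1) 1) =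
      if n = w.1 then MvPowerSeries.monomial (R := ℝ) 0 1 else 0 := by
  by_cases h1 : n = (0, 0)
  · rw [Dseries, dif_pos h1, if_neg (by rw [h1]; exact fun hc => w.2 hc.symm)]
    rw [D0series_XR]
  rw [Dseries, dif_neg h1]
  by_cases h2 : n = w.1
  · rw [if_pos h2, DN_monomial]
    have hw : (⟨n, h1⟩ : N2) = w := Subtype.ext h2
    rw [hw]
    simp
  · rw [if_neg h2, DN_monomial]
    have hw : Sum.inr w ≠ (Sum.inr ⟨n, h1⟩ : Idx) := by
      intro hc
      apply h2
      have h3 := Sum.inr.inj hc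
      exact congrArg Subtype.val h3.symm
    rw [Finsupp.single_apply, if_neg hw]
    simp

lemma Dseries_XL0 (n : ℕ × ℕ) :
    Dseries n (MvPowerSeries.monomial (R := ℝ) (Finsupp.single (Sum.inl 0) 1) 1) =
      if n = (0, 0) then MvPowerSeries.monomial (R := ℝ) (Finsupp.single (Sum.inl 1) 1) 1 else 0 := by
  by_cases h1 : n = (0, 0)
  · rw [Dseries, dif_pos h1, if_pos h1]
    exact D0series_XL0
  · rw [Dseries, dif_neg h1, if_neg h1, DN_monomial]
    rw [Finsupp.single_apply, if_neg (by simp)]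
    simp

lemma opOf_inj {γ γ' : MIdx} {n n' : ℕ × ℕ} (h : opOf γ n = opOf γ' n') :
    γ = γ' ∧ n = n' := by
  classical
  by_cases hn : n = (0, 0) <;> by_cases hn' : n' = (0, 0)
  · subst hn hn'
    refine ⟨?_, rfl⟩
    have h0 := congrFun h (MvPowerSeries.monomial (R := ℝ) (Finsupp.single (Sum.inl 0) 1) 1)
    rw [opOf, opOf, Dseries_XL0, if_pos rfl, MvPowerSeries.monomial_mul_monomial,
      MvPowerSeries.monomial_mul_monomial, one_mul] at h0
    exact add_right_cancel (monomial_inj' h0)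
  · exfalso
    have h0 := congrFun h (MvPowerSeries.monomial (R := ℝ) (Finsupp.single (Sum.inr ⟨n', hn'⟩) 1) 1)
    rw [opOf, opOf, Dseries_XR, Dseries_XR, if_neg (by rw [hn]; exact fun hc => hn' hc.symm),
      if_pos rfl, mul_zero, MvPowerSeries.monomial_mul_monomial, one_mul] at h0
    exact monomial_ne_zero' _ h0.symm
  · exfalso
    have h0 := congrFun h (MvPowerSeries.monomial (R := ℝ) (Finsupp.single (Sum.inr ⟨n, hn⟩) 1) 1)
    rw [opOf, opOf, Dseries_XR, Dseries_XR, if_pos rfl,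
      if_neg (by rw [hn']; exact fun hc => hn hc.symm), mul_zero,
      MvPowerSeries.monomial_mul_monomial, one_mul] at h0
    exact monomial_ne_zero' _ h0
  · have h0 := congrFun h (MvPowerSeries.monomial (R := ℝ) (Finsupp.single (Sum.inr ⟨n, hn⟩) 1) 1)
    rw [opOf, opOf, Dseries_XR, Dseries_XR, if_pos rfl] at h0
    by_cases hnn : n' = n
    · subst hnn
      rw [if_pos rfl, MvPowerSeries.monomial_mul_monomial, MvPowerSeries.monomial_mul_monomial,
        one_mul] at h0
      exact ⟨add_right_cancel (monomial_inj' h0), rfl⟩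
    · exfalso
      rw [if_neg hnn, mul_zero, MvPowerSeries.monomial_mul_monomial, one_mul] at h0
      exact monomial_ne_zero' _ h0

end Stmt16Aux4
section Stmt16Aux5
open MvPowerSeries Finsupp

lemma wt_le {w₁ w₂ : ℝ} (hw₁ : 0 < w₁) (hw₂ : 0 < w₂) {n m : ℕ × ℕ}
    (h1 : n.1 ≤ m.1) (h2 : n.2 ≤ m.2) : wt w₁ w₂ n ≤ wt w₁ w₂ m := by
  unfold wt
  have a1 : (n.1 : ℝ) ≤ m.1 := by exact_mod_cast h1
  have a2 : (n.2 : ℝ) ≤ m.2 := by exact_mod_cast h2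
  nlinarith

lemma wt_zero (w₁ w₂ : ℝ) : wt w₁ w₂ (0, 0) = 0 := by simp [wt]

lemma homdeg_single_inr (α w₁ w₂ : ℝ) (m : N2) :
    homdeg α w₁ w₂ (Finsupp.single (Sum.inr m) 1) = wt w₁ w₂ m.1 := by
  rw [homdeg, brk_single_inr, wsum_single_inr]
  push_cast
  ring

lemma span_zero_fun (S : Set (PS → PS)) (n : ℕ × ℕ) :
    (fun f : PS => (0 : PS) * Dseries n f) ∈ Submodule.span ℝ S := by
  have h : (fun f : PS => (0 : PS) * Dseries n f) = 0 := by
    funext f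
    rw [zero_mul]
    rfl
  rw [h]
  exact Submodule.zero_mem _

lemma span_smul_mono {α w₁ w₂ : ℝ} {β : MIdx} {n : ℕ × ℕ} (c : ℝ)
    (h : opOf β n ∈ Fam16 α w₁ w₂) :
    (fun f : PS => c • (MvPowerSeries.monomial (R := ℝ) β 1 : PS) * Dseries n f)
      ∈ Submodule.span ℝ (Fam16 α w₁ w₂) := by
  have he : (fun f : PS => c • (MvPowerSeries.monomial (R := ℝ) β 1 : PS) * Dseries n f)
      = c • opOf β n := by
    funext f
    show _ = c • (opOf β n f)
    rw [opOf, smul_mul_assoc]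
  rw [he]
  exact Submodule.smul_mem _ _ (Submodule.subset_span h)

lemma span_sum {S : Set (PS → PS)} {n : ℕ × ℕ} {ι : Type} (s : Finset ι) (g : ι → PS)
    (h : ∀ j ∈ s, (fun f : PS => g j * Dseries n f) ∈ Submodule.span ℝ S) :
    (fun f : PS => (∑ j ∈ s, g j) * Dseries n f) ∈ Submodule.span ℝ S := by
  have he : (fun f : PS => (∑ j ∈ s, g j) * Dseries n f)
      = ∑ j ∈ s, fun f : PS => g j * Dseries n f := by
    funext f
    rw [Finset.sum_apply, Finset.sum_mul]
  rw [he]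
  exact Submodule.sum_mem _ h

lemma keyN {α w₁ w₂ : ℝ} {γ₁ γ₂ : MIdx} {n₁ n₂ : ℕ × ℕ} (hn₁ : n₁ ≠ (0, 0))
    (hb1 : -1 ≤ brk γ₁) (hh1 : wt w₁ w₂ n₁ < homdeg α w₁ w₂ γ₁)
    (hb2 : 0 ≤ brk γ₂) (hh2 : wt w₁ w₂ n₂ < homdeg α w₁ w₂ γ₂)
    (hc : γ₂ (Sum.inr ⟨n₁, hn₁⟩) ≠ 0) :
    0 ≤ brk (γ₁ + (γ₂ - Finsupp.single (Sum.inr ⟨n₁, hn₁⟩) 1)) ∧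
      wt w₁ w₂ n₂ < homdeg α w₁ w₂ (γ₁ + (γ₂ - Finsupp.single (Sum.inr ⟨n₁, hn₁⟩) 1)) := by
  have hle : Finsupp.single (Sum.inr (⟨n₁, hn₁⟩ : N2)) 1 ≤ γ₂ :=
    Finsupp.single_le_iff.mpr (Nat.one_le_iff_ne_zero.mpr hc)
  have hsplit : (γ₂ - Finsupp.single (Sum.inr (⟨n₁, hn₁⟩ : N2)) 1)
      + Finsupp.single (Sum.inr (⟨n₁, hn₁⟩ : N2)) 1 = γ₂ := tsub_add_cancel_of_le hle
  have hbs : brk (γ₂ - Finsupp.single (Sum.inr (⟨n₁, hn₁⟩ : N2)) 1) = brk γ₂ + 1 := by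
    have h := (brk_add (γ₂ - Finsupp.single (Sum.inr (⟨n₁, hn₁⟩ : N2)) 1)
      (Finsupp.single (Sum.inr (⟨n₁, hn₁⟩ : N2)) 1)).symm
    rw [hsplit, brk_single_inr] at h
    omega
  have hws : wsum w₁ w₂ (γ₂ - Finsupp.single (Sum.inr (⟨n₁, hn₁⟩ : N2)) 1)
      = wsum w₁ w₂ γ₂ - wt w₁ w₂ n₁ := by
    have h := (wsum_add w₁ w₂ (γ₂ - Finsupp.single (Sum.inr (⟨n₁, hn₁⟩ : N2)) 1)
      (Finsupp.single (Sum.inr (⟨n₁, hn₁⟩ : N2)) 1)).symm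
    rw [hsplit, wsum_single_inr] at h
    push_cast at h
    linarith
  constructor
  · rw [brk_add, hbs]; omega
  · rw [homdeg, brk_add, wsum_add, hbs, hws]
    rw [homdeg] at hh1 hh2
    push_cast
    ring_nf
    ring_nf at hh1 hh2
    linarith

lemma keyL {α w₁ w₂ : ℝ} {γ₁ γ₂ : MIdx} {k : ℕ} {n₂ : ℕ × ℕ}
    (hb1 : -1 ≤ brk γ₁) (hh1 : 0 < homdeg α w₁ w₂ γ₁)
    (hb2 : 0 ≤ brk γ₂) (hh2 : wt w₁ w₂ n₂ < homdeg α w₁ w₂ γ₂)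
    (hc : γ₂ (Sum.inl k) ≠ 0) :
    0 ≤ brk (γ₁ + (γ₂ - Finsupp.single (Sum.inl k) 1 + Finsupp.single (Sum.inl (k+1)) 1)) ∧
      wt w₁ w₂ n₂ <
        homdeg α w₁ w₂ (γ₁ + (γ₂ - Finsupp.single (Sum.inl k) 1 + Finsupp.single (Sum.inl (k+1)) 1)) := by
  have hle : (Finsupp.single (Sum.inl k) 1 : MIdx) ≤ γ₂ :=
    Finsupp.single_le_iff.mpr (Nat.one_le_iff_ne_zero.mpr hc)
  have hsplit : (γ₂ - Finsupp.single (Sum.inl k) 1) + Finsupp.single (Sum.inl k) 1 = γ₂ :=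
    tsub_add_cancel_of_le hle
  have hbs : brk (γ₂ - Finsupp.single (Sum.inl k) 1) = brk γ₂ - k := by
    have h := (brk_add (γ₂ - Finsupp.single (Sum.inl k) 1) (Finsupp.single (Sum.inl k) 1)).symm
    rw [hsplit, brk_single_inl] at h
    omega
  have hws : wsum w₁ w₂ (γ₂ - Finsupp.single (Sum.inl k) 1) = wsum w₁ w₂ γ₂ := by
    have h := (wsum_add w₁ w₂ (γ₂ - Finsupp.single (Sum.inl k) 1) (Finsupp.single (Sum.inl k) 1)).symm
    rw [hsplit, wsum_single_inl] at h
    linarith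
  have hb' : brk (γ₂ - Finsupp.single (Sum.inl k) 1 + Finsupp.single (Sum.inl (k+1)) 1)
      = brk γ₂ + 1 := by
    rw [brk_add, hbs, brk_single_inl]
    push_cast
    ring
  have hw' : wsum w₁ w₂ (γ₂ - Finsupp.single (Sum.inl k) 1 + Finsupp.single (Sum.inl (k+1)) 1)
      = wsum w₁ w₂ γ₂ := by
    rw [wsum_add, hws, wsum_single_inl, add_zero]
  constructor
  · rw [brk_add, hb']; omega
  · rw [homdeg, brk_add, wsum_add, hb', hw']
    rw [homdeg] at hh1 hh2
    push_cast
    ring_nf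
    ring_nf at hh1 hh2
    linarith

lemma master (α w₁ w₂ : ℝ) (hα : 0 < α) (hw₁ : 0 < w₁) (hw₂ : 0 < w₂)
    (γ₁ : MIdx) (n₁ : ℕ × ℕ) (γ₂ : MIdx) (n₂ : ℕ × ℕ)
    (hb1 : -1 ≤ brk γ₁) (hh1 : wt w₁ w₂ n₁ < homdeg α w₁ w₂ γ₁)
    (hset : ∀ n' : ℕ × ℕ, n'.1 ≤ n₁.1 → n'.2 ≤ n₁.2 → opOf γ₁ n' ∈ Fam16 α w₁ w₂)
    (hD₂ : (0 ≤ brk γ₂ ∧ wt w₁ w₂ n₂ < homdeg α w₁ w₂ γ₂) ∨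
      (∃ m : N2, γ₂ = Finsupp.single (Sum.inr m) 1 ∧ n₂.1 ≤ m.1.1 ∧ n₂.2 ≤ m.1.2 ∧ m.1 ≠ n₂)) :
    (fun f : PS => opOf γ₁ n₁ (MvPowerSeries.monomial (R := ℝ) γ₂ 1) * Dseries n₂ f)
      ∈ Submodule.span ℝ (Fam16 α w₁ w₂) := by
  simp only [opOf]
  by_cases hn₁ : n₁ = (0, 0)
  · subst hn₁
    have hDs : Dseries (0, 0) (MvPowerSeries.monomial (R := ℝ) γ₂ 1)
        = D0series (MvPowerSeries.monomial (R := ℝ) γ₂ 1) := by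
      rw [Dseries]; exact dif_pos rfl
    rw [hDs, D0_monomial, Finset.mul_sum]
    apply span_sum
    intro i hi
    rcases i with k | p
    · have hc : γ₂ (Sum.inl k) ≠ 0 := Finsupp.mem_support_iff.mp hi
      simp only [D0term]
      rw [mul_smul_comm, MvPowerSeries.monomial_mul_monomial, one_mul]
      apply span_smul_mono
      rcases hD₂ with ⟨hb2, hh2⟩ | ⟨m, hγ₂, -, -, -⟩
      · have hh1' : 0 < homdeg α w₁ w₂ γ₁ := by
          rw [wt_zero] at hh1; exact hh1
        apply Set.mem_union_left
        exact ⟨_, n₂, (keyL hb1 hh1' hb2 hh2 hc).1, (keyL hb1 hh1' hb2 hh2 hc).2, rfl⟩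
      · exfalso
        rw [hγ₂, Finsupp.support_single_ne_zero _ one_ne_zero] at hi
        simp at hi
    · simp only [D0term, mul_zero]
      exact span_zero_fun _ _
  · have hDs : Dseries n₁ (MvPowerSeries.monomial (R := ℝ) γ₂ 1)
        = DNseries ⟨n₁, hn₁⟩ (MvPowerSeries.monomial (R := ℝ) γ₂ 1) := by
      rw [Dseries]; exact dif_neg hn₁
    rw [hDs, DN_monomial, mul_smul_comm, MvPowerSeries.monomial_mul_monomial, one_mul]
    by_cases hc : γ₂ (Sum.inr ⟨n₁, hn₁⟩) = 0
    · rw [hc, Nat.cast_zero, zero_smul]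
      exact span_zero_fun _ _
    · apply span_smul_mono
      rcases hD₂ with ⟨hb2, hh2⟩ | ⟨m, hγ₂, h1, h2, hmn⟩
      · apply Set.mem_union_left
        exact ⟨_, n₂, (keyN hn₁ hb1 hh1 hb2 hh2 hc).1, (keyN hn₁ hb1 hh1 hb2 hh2 hc).2, rfl⟩
      · have hm : m = ⟨n₁, hn₁⟩ := by
          by_contra hne
          apply hc
          rw [hγ₂, Finsupp.single_apply, if_neg (fun h => hne (Sum.inr.inj h))]
        have hred : γ₁ + (γ₂ - Finsupp.single (Sum.inr ⟨n₁, hn₁⟩) 1) = γ₁ := by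
          rw [hγ₂, hm, tsub_self, add_zero]
        rw [hred]
        have hm1 : m.1 = n₁ := by rw [hm]
        exact hset n₂ (by rw [← hm1]; exact h1) (by rw [← hm1]; exact h2)

end Stmt16Aux5
/-- **Closure of the extended generator family under the pre-Lie operation.** -/
theorem stmt16 (α w₁ w₂ : ℝ) (hα : 0 < α) (hw₁ : 0 < w₁) (hw₂ : 0 < w₂)
    (D₁ : PS → PS) (hD₁ : D₁ ∈ Fam16 α w₁ w₂)
    (γ₂ : MIdx) (n₂ : ℕ × ℕ) (hD₂ : opOf γ₂ n₂ ∈ Fam16 α w₁ w₂) :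
    (fun f : PS => D₁ (MvPowerSeries.monomial (R := ℝ) γ₂ 1) * Dseries n₂ f)
      ∈ Submodule.span ℝ (Fam16 α w₁ w₂) := by
  have hD₂' : (0 ≤ brk γ₂ ∧ wt w₁ w₂ n₂ < homdeg α w₁ w₂ γ₂) ∨
      (∃ m : N2, γ₂ = Finsupp.single (Sum.inr m) 1 ∧ n₂.1 ≤ m.1.1 ∧ n₂.2 ≤ m.1.2 ∧ m.1 ≠ n₂) := by
    rcases hD₂ with ⟨γ, n, hb, hh, heq⟩ | ⟨m, n, hm, h1, h2, hmn, heq⟩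
    · obtain ⟨hγ, hn⟩ := opOf_inj heq
      subst hγ; subst hn
      exact Or.inl ⟨hb, hh⟩
    · obtain ⟨hγ, hn⟩ := opOf_inj heq
      subst hγ; subst hn
      exact Or.inr ⟨⟨m, hm⟩, rfl, h1, h2, hmn⟩
  rcases hD₁ with ⟨γ₁, n₁, hb1, hh1, rfl⟩ | ⟨m₀, n₁, hm₀, h1, h2, hne, rfl⟩
  · apply master α w₁ w₂ hα hw₁ hw₂ γ₁ n₁ γ₂ n₂ (by omega) hh1 _ hD₂'
    intro n' h1' h2'
    apply Set.mem_union_left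
    exact ⟨γ₁, n', hb1, lt_of_le_of_lt (wt_le hw₁ hw₂ h1' h2') hh1, rfl⟩
  · apply master α w₁ w₂ hα hw₁ hw₂ _ n₁ γ₂ n₂ (by rw [brk_single_inr]; omega) _ _ hD₂'
    · rw [homdeg_single_inr]
      exact wt_lt hw₁ hw₂ h1 h2 hne
    · intro n' h1' h2'
      apply Set.mem_union_right
      refine ⟨m₀, n', hm₀, le_trans h1' h1, le_trans h2' h2, ?_, rfl⟩
      intro hmn'
      subst hmn'
      exact hne (Prod.ext (le_antisymm h1' h1) (le_antisymm h2' h2))
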